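/- arXiv:1303.2147 — 14 statements merged into one kernel-verified Lean document; each statement's English description precedes it below -/
import Mathlib

section
/- Let n ≥ 2 and let G be a linear influence game with n players, weights w_{ji} and thresholds b_i. Define a 2-action polymatrix game on the same n players by setting, for each ordered pair of distinct players j, i, the partial payoff α_{ji}(x_j, x_i) = x_i·w_{ji}·x_j − x_i·b_i/(n−1). Then a joint action x ∈ {−1,1}^n is a pure-strategy Nash equilibrium of this polymatrix game if and only if it is a pure-strategy Nash equilibrium of G. -/
open Finset

/-- An LIG and the 2-action polymatrix game with partial payoffs
`α j i xj xi = xi * w j i * xj - xi * b i / (n-1)` have the same PSNE. -/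
theorem lig_to_polymatrix_same_psne (n : ℕ) (hn : 2 ≤ n)
    (w : Fin n → Fin n → ℝ) (b : Fin n → ℝ)
    (x : Fin n → ℝ) (hx : ∀ i, x i = 1 ∨ x i = -1) :
    (∀ i : Fin n,
        (∑ j ∈ univ.filter (· ≠ i), (x i * w j i * x j - x i * b i / ((n : ℝ) - 1))) ≥
          ∑ j ∈ univ.filter (· ≠ i), ((-x i) * w j i * x j - (-x i) * b i / ((n : ℝ) - 1)))
      ↔
    (∀ i : Fin n, x i * ((∑ j ∈ univ.filter (· ≠ i), w j i * x j) - b i) ≥ 0) := by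
  have hne : ((n : ℝ) - 1) ≠ 0 := by
    have : (2 : ℝ) ≤ (n : ℝ) := by exact_mod_cast hn
    linarith
  have hcard : ∀ i : Fin n, (univ.filter (· ≠ i)).card = n - 1 := by
    intro i
    rw [Finset.filter_ne', Finset.card_erase_of_mem (mem_univ i), Finset.card_univ,
      Fintype.card_fin]
  have hcardR : ∀ i : Fin n, ((univ.filter (· ≠ i)).card : ℝ) = (n : ℝ) - 1 := by
    intro i
    rw [hcard i]
    have : 1 ≤ n := by omega
    push_cast [this]
    ring
  have key : ∀ i : Fin n,
      (∑ j ∈ univ.filter (· ≠ i), (x i * w j i * x j - x i * b i / ((n : ℝ) - 1)))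
        = x i * ((∑ j ∈ univ.filter (· ≠ i), w j i * x j) - b i) := by
    intro i
    rw [Finset.sum_sub_distrib, Finset.sum_const, nsmul_eq_mul, hcardR i]
    have hc : ((n : ℝ) - 1) * (x i * b i / ((n : ℝ) - 1)) = x i * b i := by
      field_simp
    rw [hc, mul_sub, Finset.mul_sum]
    simp [mul_assoc]
  constructor
  · intro h i
    have h1 := h i
    have h2 : ∀ j ∈ univ.filter (· ≠ i),
        ((-x i) * w j i * x j - (-x i) * b i / ((n : ℝ) - 1))
        = -(x i * w j i * x j - x i * b i / ((n : ℝ) - 1)) := by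
      intro j _; ring
    rw [Finset.sum_congr rfl h2, Finset.sum_neg_distrib, key i] at h1
    linarith
  · intro h i
    have h1 := h i
    have h2 : ∀ j ∈ univ.filter (· ≠ i),
        ((-x i) * w j i * x j - (-x i) * b i / ((n : ℝ) - 1))
        = -(x i * w j i * x j - x i * b i / ((n : ℝ) - 1)) := by
      intro j _; ring
    rw [Finset.sum_congr rfl h2, Finset.sum_neg_distrib, key i]
    linarith
end

section
/- Let n ≥ 2 and let a 2-action polymatrix game with n players and partial payoffs α_{ji} be given. Define a linear influence game on the same players with weights w_{ji} = (1/4)·(α_{ji}(1,1) − α_{ji}(−1,1) − α_{ji}(1,−1) + α_{ji}(−1,−1)) for j ≠ i, and thresholds b_i = −(1/4)·Σ_{j≠i} (α_{ji}(1,1) + α_{ji}(−1,1) − α_{ji}(1,−1) − α_{ji}(−1,−1)). Then a joint action x ∈ {−1,1}^n is a pure-strategy Nash equilibrium of the polymatrix game if and only if it is a pure-strategy Nash equilibrium of this linear influence game. -/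
open Finset

/-- Any 2-action polymatrix game with partial payoffs `α` has the same
PSNE as the LIG with weights `w j i = (1/4)(α j i 1 1 - α j i (-1) 1 - α j i 1 (-1) + α j i (-1) (-1))`
and thresholds `b i = -(1/4) ∑_{j≠i} (α j i 1 1 + α j i (-1) 1 - α j i 1 (-1) - α j i (-1) (-1))`. -/
theorem polymatrix_to_lig_same_psne (n : ℕ) (hn : 2 ≤ n)
    (α : Fin n → Fin n → ℝ → ℝ → ℝ)
    (x : Fin n → ℝ) (hx : ∀ i, x i = 1 ∨ x i = -1) :
    (∀ i : Fin n,
        (∑ j ∈ univ.filter (· ≠ i), α j i (x j) (x i)) ≥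
          ∑ j ∈ univ.filter (· ≠ i), α j i (x j) (-x i))
      ↔
    (∀ i : Fin n,
        x i * ((∑ j ∈ univ.filter (· ≠ i),
            ((1 / 4) * (α j i 1 1 - α j i (-1) 1 - α j i 1 (-1) + α j i (-1) (-1))) * x j)
          - (-(1 / 4) * ∑ j ∈ univ.filter (· ≠ i),
              (α j i 1 1 + α j i (-1) 1 - α j i 1 (-1) - α j i (-1) (-1)))) ≥ 0) := by
  have key : ∀ i : Fin n,
      (∑ j ∈ univ.filter (· ≠ i), α j i (x j) (x i))
        - (∑ j ∈ univ.filter (· ≠ i), α j i (x j) (-x i))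
      = 2 * (x i * ((∑ j ∈ univ.filter (· ≠ i),
            ((1 / 4) * (α j i 1 1 - α j i (-1) 1 - α j i 1 (-1) + α j i (-1) (-1))) * x j)
          - (-(1 / 4) * ∑ j ∈ univ.filter (· ≠ i),
              (α j i 1 1 + α j i (-1) 1 - α j i 1 (-1) - α j i (-1) (-1))))) := by
    intro i
    rw [← Finset.sum_sub_distrib, Finset.mul_sum, mul_sub, Finset.mul_sum, Finset.mul_sum,
      ← Finset.sum_sub_distrib, Finset.mul_sum]
    apply Finset.sum_congr rfl
    intro j _
    rcases hx i with hi | hi <;> rcases hx j with hj | hj <;> rw [hi, hj] <;> ring_nf <;> ring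
  constructor <;> intro h i <;> have := key i <;> have := h i <;> [skip; skip] <;>
    nlinarith [key i, h i]
end

section
/- Let G be a linear influence game with n players whose weights are symmetric, i.e., w_{ij} = w_{ji} for all distinct i, j. Define Φ : {−1,1}^n → ℝ by Φ(x) = Σ_{t=1}^n x_t·(Σ_{i≠t} x_i w_{it}/2 − b_t). Then for every player j and every choice x_{−j} ∈ {−1,1}^{n−1} of the other players' actions, u_j(1, x_{−j}) − u_j(−1, x_{−j}) = Φ(1, x_{−j}) − Φ(−1, x_{−j}) = 2·(Σ_{i≠j} x_i w_{ij} − b_j); i.e., Φ is an exact potential function for G. -/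
open Finset

/-- For an LIG with symmetric weights, `Φ(x) = ∑_t x_t (∑_{i≠t} x_i w_{it}/2 - b_t)`
is an exact potential function: for every player `j` and every `x_{-j}`,
`u_j(1,x_{-j}) - u_j(-1,x_{-j}) = Φ(1,x_{-j}) - Φ(-1,x_{-j}) = 2 (∑_{i≠j} x_i w_{ij} - b_j)`. -/
theorem symmetric_lig_exact_potential (n : ℕ)
    (w : Fin n → Fin n → ℝ) (b : Fin n → ℝ)
    (hsym : ∀ i j : Fin n, i ≠ j → w i j = w j i)
    (j : Fin n) (x : Fin n → ℝ) (hx : ∀ i, x i = 1 ∨ x i = -1) :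
    let Φ : (Fin n → ℝ) → ℝ := fun y =>
      ∑ t, y t * ((∑ i ∈ univ.filter (· ≠ t), y i * w i t / 2) - b t)
    let u : Fin n → (Fin n → ℝ) → ℝ := fun i y =>
      y i * ((∑ k ∈ univ.filter (· ≠ i), w k i * y k) - b i)
    u j (Function.update x j 1) - u j (Function.update x j (-1))
        = Φ (Function.update x j 1) - Φ (Function.update x j (-1)) ∧
    Φ (Function.update x j 1) - Φ (Function.update x j (-1))
        = 2 * ((∑ i ∈ univ.filter (· ≠ j), x i * w i j) - b j) := by
  intro Φ u
  set S : ℝ := ∑ i ∈ univ.filter (· ≠ j), x i * w i j with hS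
  -- inner sum at player j is unaffected by the update
  have hA : ∀ c : ℝ, ∑ i ∈ univ.filter (· ≠ j), Function.update x j c i * w i j / 2
      = ∑ i ∈ univ.filter (· ≠ j), x i * w i j / 2 := by
    intro c
    refine Finset.sum_congr rfl fun i hi => ?_
    rw [Function.update_of_ne (Finset.mem_filter.mp hi).2]
  -- inner sum at player t ≠ j
  have hB : ∀ (c : ℝ) (t : Fin n), t ≠ j →
      ∑ i ∈ univ.filter (· ≠ t), Function.update x j c i * w i t / 2
        = c * w j t / 2 + ∑ i ∈ (univ.filter (· ≠ t)).erase j, x i * w i t / 2 := by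
    intro c t ht
    have hj : j ∈ univ.filter (· ≠ t) := by simp [Ne.symm ht]
    rw [← Finset.add_sum_erase _ _ hj, Function.update_self]
    congr 1
    refine Finset.sum_congr rfl fun i hi => ?_
    rw [Function.update_of_ne (Finset.mem_erase.mp hi).1]
  have hPhi : ∀ c : ℝ, Φ (Function.update x j c)
      = c * ((∑ i ∈ univ.filter (· ≠ j), x i * w i j / 2) - b j)
        + ∑ t ∈ univ.erase j, x t * ((c * w j t / 2
            + ∑ i ∈ (univ.filter (· ≠ t)).erase j, x i * w i t / 2) - b t) := by
    intro c
    show ∑ t, Function.update x j c t * _ = _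
    rw [← Finset.add_sum_erase univ _ (Finset.mem_univ j)]
    congr 1
    · rw [Function.update_self, hA]
    · refine Finset.sum_congr rfl fun t ht => ?_
      have htj := (Finset.mem_erase.mp ht).1
      rw [Function.update_of_ne htj, hB c t htj]
  have hsum : ∑ t ∈ univ.erase j, x t * w j t = S := by
    rw [hS, ← Finset.filter_ne']
    refine Finset.sum_congr rfl fun t ht => ?_
    rw [hsym t j (Finset.mem_filter.mp ht).2]
  have hAhalf : (∑ i ∈ univ.filter (· ≠ j), x i * w i j / 2) = S / 2 := by
    rw [hS, Finset.sum_div]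
  have hPhidiff : Φ (Function.update x j 1) - Φ (Function.update x j (-1))
      = 2 * (S - b j) := by
    rw [hPhi 1, hPhi (-1), hAhalf]
    have h1 : ∑ t ∈ univ.erase j, x t * ((1 * w j t / 2
            + ∑ i ∈ (univ.filter (· ≠ t)).erase j, x i * w i t / 2) - b t)
        - ∑ t ∈ univ.erase j, x t * (((-1) * w j t / 2
            + ∑ i ∈ (univ.filter (· ≠ t)).erase j, x i * w i t / 2) - b t)
        = ∑ t ∈ univ.erase j, x t * w j t := by
      rw [← Finset.sum_sub_distrib]
      refine Finset.sum_congr rfl fun t _ => ?_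
      ring
    rw [hsum] at h1
    linarith [h1]
  have hudiff : u j (Function.update x j 1) - u j (Function.update x j (-1))
      = 2 * (S - b j) := by
    have hT : ∀ c : ℝ, ∑ k ∈ univ.filter (· ≠ j), w k j * Function.update x j c k = S := by
      intro c
      rw [hS]
      refine Finset.sum_congr rfl fun k hk => ?_
      rw [Function.update_of_ne (Finset.mem_filter.mp hk).2, mul_comm]
    show Function.update x j 1 j * (_ - b j) - Function.update x j (-1) j * (_ - b j) = _
    rw [Function.update_self, Function.update_self, hT 1, hT (-1)]
    ring
  exact ⟨by rw [hPhidiff, hudiff], by rw [hPhidiff]⟩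
end

section
/- Let G be a linear influence game with n players whose weights are symmetric (w_{ij} = w_{ji} for all distinct i, j), and let Φ(x) = Σ_{t=1}^n x_t·(Σ_{i≠t} x_i w_{it}/2 − b_t). Then every global maximizer x* of Φ over {−1,1}^n is a pure-strategy Nash equilibrium of G; in particular, every LIG with symmetric weights has at least one pure-strategy Nash equilibrium. -/
open Finset

lemma flip_eq (n : ℕ) (w : Fin n → Fin n → ℝ) (b : Fin n → ℝ)
    (hsym : ∀ i j : Fin n, i ≠ j → w i j = w j i) (x : Fin n → ℝ) (i : Fin n) :
    (∑ t, (Function.update x i (-(x i))) t *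
        ((∑ k ∈ univ.filter (· ≠ t), (Function.update x i (-(x i))) k * w k t / 2) - b t))
    = (∑ t, x t * ((∑ k ∈ univ.filter (· ≠ t), x k * w k t / 2) - b t))
      - 2 * (x i * ((∑ k ∈ univ.filter (· ≠ i), w k i * x k) - b i)) := by
  classical
  set y := Function.update x i (-(x i)) with hy
  simp only [Finset.filter_ne']
  have hyi : y i = -(x i) := Function.update_self _ _ _
  have hyk : ∀ k, k ≠ i → y k = x k := fun k hk => Function.update_of_ne hk _ _
  -- key: for t ≠ i the inner sums differ by -(x i) * w i t
  have key : ∀ t ∈ univ.erase i,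
      y t * ((∑ k ∈ univ.erase t, y k * w k t / 2) - b t)
      = x t * ((∑ k ∈ univ.erase t, x k * w k t / 2) - b t) - x i * (x t * w i t) := by
    intro t ht
    have hti : t ≠ i := (Finset.mem_erase.mp ht).1
    have hyt : y t = x t := hyk t hti
    have hinner : (∑ k ∈ univ.erase t, y k * w k t / 2)
        = (∑ k ∈ univ.erase t, x k * w k t / 2) - x i * w i t := by
      have : (∑ k ∈ univ.erase t, (y k * w k t / 2 - x k * w k t / 2))
          = -(x i) * w i t / 2 - x i * w i t / 2 := by
        rw [Finset.sum_eq_single_of_mem i (Finset.mem_erase.mpr ⟨Ne.symm hti, mem_univ i⟩)]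
        · rw [hyi]
        · intro k _ hk
          rw [hyk k hk]; ring
      rw [Finset.sum_sub_distrib] at this
      linarith
    rw [hyt, hinner]; ring
  rw [← Finset.add_sum_erase univ _ (mem_univ i), ← Finset.add_sum_erase univ
    (fun t => x t * ((∑ k ∈ univ.erase t, x k * w k t / 2) - b t)) (mem_univ i),
    Finset.sum_congr rfl key, Finset.sum_sub_distrib]
  have hsum : (∑ t ∈ univ.erase i, x i * (x t * w i t))
      = x i * (∑ k ∈ univ.erase i, w k i * x k) := by
    rw [Finset.mul_sum]
    refine Finset.sum_congr rfl fun t ht => ?_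
    rw [hsym i t (Ne.symm (Finset.mem_erase.mp ht).1)]; ring
  have hiner : (∑ k ∈ univ.erase i, y k * w k i / 2) = (∑ k ∈ univ.erase i, x k * w k i / 2) :=
    Finset.sum_congr rfl fun k hk => by rw [hyk k (Finset.mem_erase.mp hk).1]
  have hP : (∑ k ∈ univ.erase i, x k * w k i / 2) = (∑ k ∈ univ.erase i, w k i * x k) / 2 := by
    rw [Finset.sum_div]
    exact Finset.sum_congr rfl fun k _ => by ring
  rw [hyi, hiner, hsum, hP]
  ring

/-- For an LIG with symmetric weights, every global maximizer of the potential
`Φ` over `{-1,1}^n` is a PSNE; in particular every symmetric-weight LIG has a PSNE. -/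
theorem symmetric_lig_maximizer_psne (n : ℕ)
    (w : Fin n → Fin n → ℝ) (b : Fin n → ℝ)
    (hsym : ∀ i j : Fin n, i ≠ j → w i j = w j i) :
    let Φ : (Fin n → ℝ) → ℝ := fun y =>
      ∑ t, y t * ((∑ i ∈ univ.filter (· ≠ t), y i * w i t / 2) - b t)
    (∀ x : Fin n → ℝ, (∀ i, x i = 1 ∨ x i = -1) →
        (∀ y : Fin n → ℝ, (∀ i, y i = 1 ∨ y i = -1) → Φ y ≤ Φ x) →
        ∀ i, x i * ((∑ k ∈ univ.filter (· ≠ i), w k i * x k) - b i) ≥ 0) ∧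
    (∃ x : Fin n → ℝ, (∀ i, x i = 1 ∨ x i = -1) ∧
        ∀ i, x i * ((∑ k ∈ univ.filter (· ≠ i), w k i * x k) - b i) ≥ 0) := by
  classical
  intro Φ
  have main : ∀ x : Fin n → ℝ, (∀ i, x i = 1 ∨ x i = -1) →
      (∀ y : Fin n → ℝ, (∀ i, y i = 1 ∨ y i = -1) → Φ y ≤ Φ x) →
      ∀ i, x i * ((∑ k ∈ univ.filter (· ≠ i), w k i * x k) - b i) ≥ 0 := by
    intro x hx hmax i
    have hy : ∀ k, (Function.update x i (-(x i))) k = 1 ∨ (Function.update x i (-(x i))) k = -1 := by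
      intro k
      by_cases hk : k = i
      · subst hk
        rw [Function.update_self]
        rcases hx k with h | h <;> simp [h]
      · rw [Function.update_of_ne hk]
        exact hx k
    have hle := hmax _ hy
    have heq := flip_eq n w b hsym x i
    simp only [Φ] at hle
    rw [heq] at hle
    linarith
  refine ⟨main, ?_⟩
  -- existence of a maximizer
  let f : (Fin n → Bool) → (Fin n → ℝ) := fun c i => if c i then 1 else -1
  obtain ⟨c, hc⟩ := Finite.exists_max (fun c => Φ (f c))
  have hxv : ∀ i, f c i = 1 ∨ f c i = -1 := by
    intro i; by_cases h : c i <;> simp [f, h]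
  refine ⟨f c, hxv, main (f c) hxv ?_⟩
  intro y hyv
  have : y = f (fun i => y i = 1) := by
    funext i
    rcases hyv i with h | h <;> simp [f, h] <;> norm_num
  rw [this]
  exact hc _
end

section
/- Let G be an indiscriminate linear influence game: there are nonzero reals δ_1, …, δ_n, all of the same sign ρ ∈ {−1,1} (i.e., ρ·δ_i > 0 for all i), such that w_{ij} = δ_i for every j ≠ i. Define Φ(x) = ρ·[(Σ_{i=1}^n δ_i x_i)² − 2·Σ_{i=1}^n b_i δ_i x_i]. Then for every player j and every x_{−j} ∈ {−1,1}^{n−1}, Φ(1, x_{−j}) − Φ(−1, x_{−j}) = 4·ρ·δ_j·(Σ_{i≠j} δ_i x_i − b_j) = 2·ρ·δ_j·(u_j(1, x_{−j}) − u_j(−1, x_{−j})); consequently u_j(1, x_{−j}) − u_j(−1, x_{−j}) > 0 if and only if Φ(1, x_{−j}) − Φ(−1, x_{−j}) > 0, i.e., Φ is an ordinal potential function for G. -/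
open Finset

/-- For an indiscriminate LIG (`w i j = δ i` for all `j ≠ i`, all `δ i` of the same
sign `ρ`), `Φ(x) = ρ ((∑ δ_i x_i)² - 2 ∑ b_i δ_i x_i)` satisfies
`Φ(1,x_{-j}) - Φ(-1,x_{-j}) = 4 ρ δ_j (∑_{i≠j} δ_i x_i - b_j)
  = 2 ρ δ_j (u_j(1,x_{-j}) - u_j(-1,x_{-j}))`,
hence the payoff difference and the potential difference have the same sign:
`Φ` is an ordinal potential function. -/
theorem indiscriminate_lig_ordinal_potential (n : ℕ)
    (w : Fin n → Fin n → ℝ) (δ : Fin n → ℝ) (b : Fin n → ℝ) (ρ : ℝ)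
    (hρ : ρ = 1 ∨ ρ = -1) (hδ : ∀ i, ρ * δ i > 0)
    (hw : ∀ i j : Fin n, j ≠ i → w i j = δ i)
    (j : Fin n) (x : Fin n → ℝ) (hx : ∀ i, x i = 1 ∨ x i = -1) :
    let Φ : (Fin n → ℝ) → ℝ := fun y =>
      ρ * ((∑ i, δ i * y i) ^ 2 - 2 * ∑ i, b i * δ i * y i)
    let u : Fin n → (Fin n → ℝ) → ℝ := fun i y =>
      y i * ((∑ k ∈ univ.filter (· ≠ i), w k i * y k) - b i)
    Φ (Function.update x j 1) - Φ (Function.update x j (-1))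
        = 4 * ρ * δ j * ((∑ i ∈ univ.filter (· ≠ j), δ i * x i) - b j) ∧
    Φ (Function.update x j 1) - Φ (Function.update x j (-1))
        = 2 * ρ * δ j *
            (u j (Function.update x j 1) - u j (Function.update x j (-1))) ∧
    (0 < u j (Function.update x j 1) - u j (Function.update x j (-1))
        ↔ 0 < Φ (Function.update x j 1) - Φ (Function.update x j (-1))) := by

  intro Φ u
  have hfilter : (univ.filter (· ≠ j) : Finset (Fin n)) = univ.erase j :=
    Finset.filter_ne' univ j
  set A := ∑ i ∈ univ.filter (· ≠ j), δ i * x i with hA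
  set B := ∑ i ∈ univ.filter (· ≠ j), b i * δ i * x i with hB
  -- sums under update
  have hsum1 : ∀ c : ℝ, (∑ i, δ i * Function.update x j c i) = δ j * c + A := by
    intro c
    rw [hA, hfilter, ← Finset.add_sum_erase _ _ (Finset.mem_univ j)]
    congr 1
    · rw [Function.update_self]
    · exact Finset.sum_congr rfl fun i hi => by
        rw [Function.update_of_ne (Finset.ne_of_mem_erase hi)]
  have hsum2 : ∀ c : ℝ, (∑ i, b i * δ i * Function.update x j c i)
      = b j * δ j * c + B := by
    intro c
    rw [hB, hfilter, ← Finset.add_sum_erase _ _ (Finset.mem_univ j)]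
    congr 1
    · rw [Function.update_self]
    · exact Finset.sum_congr rfl fun i hi => by
        rw [Function.update_of_ne (Finset.ne_of_mem_erase hi)]
  have hΦ : Φ (Function.update x j 1) - Φ (Function.update x j (-1))
      = 4 * ρ * δ j * (A - b j) := by
    show ρ * ((∑ i, δ i * Function.update x j 1 i) ^ 2
        - 2 * ∑ i, b i * δ i * Function.update x j 1 i)
      - ρ * ((∑ i, δ i * Function.update x j (-1) i) ^ 2
        - 2 * ∑ i, b i * δ i * Function.update x j (-1) i)
      = 4 * ρ * δ j * (A - b j)
    rw [hsum1 1, hsum1 (-1), hsum2 1, hsum2 (-1)]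
    ring
  have husum : ∀ c : ℝ, (∑ k ∈ univ.filter (· ≠ j), w k j * Function.update x j c k) = A := by
    intro c
    rw [hA]
    refine Finset.sum_congr rfl fun k hk => ?_
    have hkj : k ≠ j := (Finset.mem_filter.mp hk).2
    rw [Function.update_of_ne hkj, hw k j hkj.symm]
  have hu : u j (Function.update x j 1) - u j (Function.update x j (-1))
      = 2 * (A - b j) := by
    show Function.update x j 1 j
        * ((∑ k ∈ univ.filter (· ≠ j), w k j * Function.update x j 1 k) - b j)
      - Function.update x j (-1) j
        * ((∑ k ∈ univ.filter (· ≠ j), w k j * Function.update x j (-1) k) - b j)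
      = 2 * (A - b j)
    rw [husum 1, husum (-1), Function.update_self, Function.update_self]
    ring
  have hpos : 0 < ρ * δ j := hδ j
  refine ⟨hΦ, by rw [hΦ, hu]; ring, ?_⟩
  rw [hΦ, hu]
  constructor
  · intro h
    nlinarith
  · intro h
    nlinarith
end

section
/- Let G be an indiscriminate linear influence game: there are nonzero reals δ_1, …, δ_n, all of the same sign ρ ∈ {−1,1} (ρ·δ_i > 0 for all i), such that w_{ij} = δ_i for every j ≠ i, and let Φ(x) = ρ·[(Σ_{i=1}^n δ_i x_i)² − 2·Σ_{i=1}^n b_i δ_i x_i]. Then every global maximizer x* of Φ over {−1,1}^n is a pure-strategy Nash equilibrium of G; in particular, every indiscriminate LIG has at least one pure-strategy Nash equilibrium. -/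
set_option maxHeartbeats 1000000


open Finset

/-- For an indiscriminate LIG (`w i j = δ i` for `j ≠ i`, all `δ i` of the same
sign `ρ`), every global maximizer of `Φ(x) = ρ ((∑ δ_i x_i)² - 2 ∑ b_i δ_i x_i)` over
`{-1,1}^n` is a PSNE; in particular every indiscriminate LIG has a PSNE. -/
theorem indiscriminate_lig_maximizer_psne (n : ℕ)
    (w : Fin n → Fin n → ℝ) (δ : Fin n → ℝ) (b : Fin n → ℝ) (ρ : ℝ)
    (hρ : ρ = 1 ∨ ρ = -1) (hδ : ∀ i, ρ * δ i > 0)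
    (hw : ∀ i j : Fin n, j ≠ i → w i j = δ i) :
    let Φ : (Fin n → ℝ) → ℝ := fun y =>
      ρ * ((∑ i, δ i * y i) ^ 2 - 2 * ∑ i, b i * δ i * y i)
    (∀ x : Fin n → ℝ, (∀ i, x i = 1 ∨ x i = -1) →
        (∀ y : Fin n → ℝ, (∀ i, y i = 1 ∨ y i = -1) → Φ y ≤ Φ x) →
        ∀ i, x i * ((∑ k ∈ univ.filter (· ≠ i), w k i * x k) - b i) ≥ 0) ∧
    (∃ x : Fin n → ℝ, (∀ i, x i = 1 ∨ x i = -1) ∧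
        ∀ i, x i * ((∑ k ∈ univ.filter (· ≠ i), w k i * x k) - b i) ≥ 0) := by
  classical
  intro Φ
  have part1 : ∀ x : Fin n → ℝ, (∀ i, x i = 1 ∨ x i = -1) →
      (∀ y : Fin n → ℝ, (∀ i, y i = 1 ∨ y i = -1) → Φ y ≤ Φ x) →
      ∀ i, x i * ((∑ k ∈ univ.filter (· ≠ i), w k i * x k) - b i) ≥ 0 := by
    intro x hx hmax i
    set x' : Fin n → ℝ := Function.update x i (-(x i)) with hx'def
    have hx' : ∀ j, x' j = 1 ∨ x' j = -1 := by
      intro j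
      by_cases h : j = i
      · subst h
        rw [hx'def, Function.update_self]
        rcases hx j with h1 | h1 <;> rw [h1] <;> [right; left] <;> norm_num
      · rw [hx'def, Function.update_of_ne h]; exact hx j
    have hle := hmax x' hx'
    set S := ∑ j, δ j * x j with hS
    set T := ∑ j, b j * δ j * x j with hT
    have h1 : ∑ j, δ j * x' j = S - 2 * (δ i * x i) := by
      have h0 : ∑ j, (δ j * x' j - δ j * x j) = -(2 * (δ i * x i)) := by
        rw [Finset.sum_eq_single i]
        · rw [hx'def, Function.update_self]; ring
        · intro j _ hj
          rw [hx'def, Function.update_of_ne hj]; ring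
        · intro h; exact absurd (Finset.mem_univ i) h
      rw [Finset.sum_sub_distrib] at h0
      rw [hS]; linarith
    have h2 : ∑ j, b j * δ j * x' j = T - 2 * (b i * δ i * x i) := by
      have h0 : ∑ j, (b j * δ j * x' j - b j * δ j * x j) = -(2 * (b i * δ i * x i)) := by
        rw [Finset.sum_eq_single i]
        · rw [hx'def, Function.update_self]; ring
        · intro j _ hj
          rw [hx'def, Function.update_of_ne hj]; ring
        · intro h; exact absurd (Finset.mem_univ i) h
      rw [Finset.sum_sub_distrib] at h0
      rw [hT]; linarith
    have hxi2 : x i * x i = 1 := by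
      rcases hx i with h | h <;> rw [h] <;> norm_num
    have hsum : ∑ k ∈ univ.filter (· ≠ i), w k i * x k = S - δ i * x i := by
      have hfe : (univ : Finset (Fin n)).filter (· ≠ i) = univ.erase i :=
        Finset.filter_ne' univ i
      rw [hfe]
      have h0 : ∑ k ∈ univ.erase i, w k i * x k = ∑ k ∈ univ.erase i, δ k * x k := by
        apply Finset.sum_congr rfl
        intro k hk
        rw [hw k i ((Finset.mem_erase.mp hk).1.symm)]
      rw [h0]
      have h1 : ∑ k ∈ univ.erase i, δ k * x k + δ i * x i = S := by
        rw [hS]; exact Finset.sum_erase_add _ _ (Finset.mem_univ i)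
      linarith
    rw [hsum]
    -- From hle : Φ x' ≤ Φ x, derive the inequality
    have hΦx : Φ x = ρ * (S ^ 2 - 2 * T) := rfl
    have hΦx' : Φ x' = ρ * ((S - 2 * (δ i * x i)) ^ 2 - 2 * (T - 2 * (b i * δ i * x i))) := by
      show ρ * ((∑ j, δ j * x' j) ^ 2 - 2 * ∑ j, b j * δ j * x' j) = _
      rw [h1, h2]
    rw [hΦx, hΦx'] at hle
    have key : 0 ≤ 4 * (ρ * δ i) * (x i * (S - δ i * x i - b i)) := by
      nlinarith [hle]
    have hpos := hδ i
    nlinarith [key, hpos]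
  refine ⟨part1, ?_⟩
  obtain ⟨g, -, hg⟩ := Finset.exists_max_image (univ : Finset (Fin n → Bool))
    (fun g => Φ (fun i => if g i then 1 else -1)) ⟨fun _ => true, Finset.mem_univ _⟩
  set x : Fin n → ℝ := fun i => if g i then 1 else -1 with hxdef
  have hxpm : ∀ i, x i = 1 ∨ x i = -1 := by
    intro i; by_cases h : g i <;> simp [hxdef, h]
  refine ⟨x, hxpm, part1 x hxpm ?_⟩
  intro y hy
  have hyeq : y = fun i => if (fun j => decide (y j = 1)) i = true then (1:ℝ) else -1 := by
    funext i
    rcases hy i with h | h <;> simp [h] <;> norm_num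
  rw [hyeq]
  exact hg _ (Finset.mem_univ _)
end

section
/- Let G be a linear influence game with n players in which all weights are nonnegative: w_{ji} ≥ 0 for all distinct j, i. Define the synchronous best-response map T : {−1,1}^n → {−1,1}^n by T(x)_i = 1 if Σ_{j≠i} w_{ji} x_j − b_i ≥ 0 and T(x)_i = −1 otherwise. Then the iterates T^k(𝟙) starting from the all-ones joint action 𝟙 are componentwise nonincreasing in k; T^n(𝟙) is a fixed point of T; and T^n(𝟙) is a pure-strategy Nash equilibrium of G. In particular, every LIG with nonnegative weights has at least one pure-strategy Nash equilibrium. -/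
open Finset

/-- In an LIG with nonnegative weights, the synchronous best-response iterates
starting from the all-ones joint action are componentwise nonincreasing, reach a fixed point
after `n` steps, and that fixed point is a PSNE; in particular a PSNE exists. -/
theorem nonneg_lig_best_response_dynamics (n : ℕ)
    (w : Fin n → Fin n → ℝ) (b : Fin n → ℝ)
    (hw : ∀ j i : Fin n, j ≠ i → 0 ≤ w j i) :
    let T : (Fin n → ℝ) → (Fin n → ℝ) := fun x i =>
      if 0 ≤ (∑ j ∈ univ.filter (· ≠ i), w j i * x j) - b i then 1 else -1
    let one : Fin n → ℝ := fun _ => 1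
    (∀ k : ℕ, ∀ i : Fin n, T^[k + 1] one i ≤ T^[k] one i) ∧
    T (T^[n] one) = T^[n] one ∧
    (∀ i : Fin n,
        T^[n] one i * ((∑ j ∈ univ.filter (· ≠ i), w j i * T^[n] one j) - b i) ≥ 0) ∧
    (∃ x : Fin n → ℝ, (∀ i, x i = 1 ∨ x i = -1) ∧
        ∀ i, x i * ((∑ j ∈ univ.filter (· ≠ i), w j i * x j) - b i) ≥ 0) := by
  intro T one
  -- T takes values in {1, -1}
  have hpm : ∀ x i, T x i = 1 ∨ T x i = -1 := by
    intro x i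
    simp only [T]
    split <;> simp
  -- monotonicity of T
  have hmono : ∀ x y : Fin n → ℝ, (∀ j, x j ≤ y j) → ∀ i, T x i ≤ T y i := by
    intro x y hxy i
    have hsum : (∑ j ∈ univ.filter (· ≠ i), w j i * x j)
        ≤ ∑ j ∈ univ.filter (· ≠ i), w j i * y j := by
      refine Finset.sum_le_sum ?_
      intro j hj
      have hji : j ≠ i := by simpa using hj
      exact mul_le_mul_of_nonneg_left (hxy j) (hw j i hji)
    simp only [T]
    split
    · split
      · exact le_refl _
      · exfalso; linarith
    · split <;> [linarith; exact le_refl _]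
  -- values of iterates are in {1, -1}
  have hvals : ∀ k i, T^[k] one i = 1 ∨ T^[k] one i = -1 := by
    intro k i
    cases k with
    | zero => left; rfl
    | succ m => rw [Function.iterate_succ_apply']; exact hpm _ i
  -- monotone decreasing iterates
  have hdec : ∀ k : ℕ, ∀ i : Fin n, T^[k + 1] one i ≤ T^[k] one i := by
    intro k
    induction k with
    | zero =>
      intro i
      rcases hpm one i with h | h <;> norm_num [h, one]
    | succ m ih =>
      intro i
      have ih' : ∀ j, T (T^[m] one) j ≤ T^[m] one j := fun j => by
        rw [← Function.iterate_succ_apply' T m one]; exact ih j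
      rw [Function.iterate_succ_apply', Function.iterate_succ_apply']
      exact hmono _ _ ih' i
  -- fixedness propagates
  have hprop : ∀ k, T^[k + 1] one = T^[k] one → ∀ m, k ≤ m → T^[m + 1] one = T^[m] one := by
    intro k hk m hm
    induction m, hm using Nat.le_induction with
    | base => exact hk
    | succ m hm ih =>
      have h1 : T^[m + 1 + 1] one = T (T^[m + 1] one) := Function.iterate_succ_apply' T (m + 1) one
      rw [h1, ih, ← Function.iterate_succ_apply' T m one]
      exact ih
  -- the set of +1 coordinates
  set S : ℕ → Finset (Fin n) := fun k => univ.filter (fun i => T^[k] one i = 1) with hSdef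
  have hSsub : ∀ k, T^[k + 1] one ≠ T^[k] one → S (k + 1) ⊂ S k := by
    intro k hne
    constructor
    · intro i hi
      simp only [hSdef, mem_filter, mem_univ, true_and] at hi ⊢
      rcases hvals k i with h | h
      · exact h
      · exfalso; have := hdec k i; rw [hi, h] at this; linarith
    · intro hsub
      apply hne
      funext i
      rcases hvals (k + 1) i with h1 | h1 <;> rcases hvals k i with h2 | h2
      · rw [h1, h2]
      · exfalso; have := hdec k i; rw [h1, h2] at this; linarith
      · exfalso
        have hi : i ∈ S k := by
          simp only [hSdef, mem_filter, mem_univ, true_and]; exact h2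
        have hmem := hsub hi
        simp only [hSdef, mem_filter, mem_univ, true_and] at hmem
        rw [h1] at hmem; norm_num at hmem
      · rw [h1, h2]
  -- there is a fixed step before n
  have hex : ∃ k, k ≤ n ∧ T^[k + 1] one = T^[k] one := by
    by_contra hcon
    push_neg at hcon
    have hcard : ∀ m, m ≤ n + 1 → (S m).card + m ≤ n := by
      intro m
      induction m with
      | zero =>
        intro _
        simpa using Finset.card_le_univ (S 0)
      | succ m ih =>
        intro hm
        have hm' : m ≤ n := Nat.lt_succ_iff.mp hm
        have hlt : (S (m + 1)).card < (S m).card :=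
          Finset.card_lt_card (hSsub m (hcon m hm'))
        have := ih (le_trans hm' (Nat.le_succ n))
        omega
    have := hcard (n + 1) (le_refl _)
    omega
  obtain ⟨k, hk, hfix⟩ := hex
  have hfixn : T^[n + 1] one = T^[n] one := hprop k hfix n hk
  have hTfix : T (T^[n] one) = T^[n] one := by
    rw [← Function.iterate_succ_apply' T n one]; exact hfixn
  -- PSNE property
  have hpsne : ∀ i : Fin n,
      T^[n] one i * ((∑ j ∈ univ.filter (· ≠ i), w j i * T^[n] one j) - b i) ≥ 0 := by
    intro i
    have hfi : T (T^[n] one) i = T^[n] one i := by rw [hTfix]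
    rcases hvals n i with h | h
    · rw [h, one_mul]
      rw [h] at hfi
      by_contra hneg
      push_neg at hneg
      simp only [T, if_neg (not_le.mpr hneg)] at hfi
      norm_num at hfi
    · rw [h] at hfi ⊢
      by_contra hneg
      push_neg at hneg
      have hpos : 0 ≤ (∑ j ∈ univ.filter (· ≠ i), w j i * T^[n] one j) - b i := by
        nlinarith
      simp only [T, if_pos hpos] at hfi
      norm_num at hfi
  exact ⟨hdec, hTfix, hpsne, ⟨T^[n] one, hvals n, hpsne⟩⟩
end

section
/- Let G be a linear influence game with n players in which all weights are nonnegative: w_{ji} ≥ 0 for all distinct j, i. Define T : {−1,1}^n → {−1,1}^n by T(x)_i = 1 if Σ_{j≠i} w_{ji} x_j − b_i ≥ 0 and −1 otherwise, and T' : {−1,1}^n → {−1,1}^n by T'(x)_i = −1 if Σ_{j≠i} w_{ji} x_j − b_i ≤ 0 and 1 otherwise. Then every pure-strategy Nash equilibrium x of G satisfies T'^n(−𝟙) ≤ x ≤ T^n(𝟙) componentwise, where 𝟙 and −𝟙 denote the all-ones and all-minus-ones joint actions; i.e., every PSNE is contained between the equilibrium reached by best-response dynamics from all −1's and the one reached from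 all 1's. -/
open Finset

/-- In an LIG with nonnegative weights, every PSNE lies componentwise between
the outcome of `n` rounds of (tie-favoring `-1`) best-response dynamics from all `-1`'s and
the outcome of `n` rounds of (tie-favoring `1`) best-response dynamics from all `1`'s. -/
theorem nonneg_lig_psne_between_extremal_dynamics (n : ℕ)
    (w : Fin n → Fin n → ℝ) (b : Fin n → ℝ)
    (hw : ∀ j i : Fin n, j ≠ i → 0 ≤ w j i) :
    let T : (Fin n → ℝ) → (Fin n → ℝ) := fun x i =>
      if 0 ≤ (∑ j ∈ univ.filter (· ≠ i), w j i * x j) - b i then 1 else -1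
    let T' : (Fin n → ℝ) → (Fin n → ℝ) := fun x i =>
      if (∑ j ∈ univ.filter (· ≠ i), w j i * x j) - b i ≤ 0 then -1 else 1
    let one : Fin n → ℝ := fun _ => 1
    let negOne : Fin n → ℝ := fun _ => -1
    ∀ x : Fin n → ℝ, (∀ i, x i = 1 ∨ x i = -1) →
      (∀ i, x i * ((∑ j ∈ univ.filter (· ≠ i), w j i * x j) - b i) ≥ 0) →
      ∀ i : Fin n, T'^[n] negOne i ≤ x i ∧ x i ≤ T^[n] one i := by
  intro T T' one negOne x hx hpsne
  have sum_mono : ∀ (i : Fin n) (y z : Fin n → ℝ), (∀ j, y j ≤ z j) →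
      (∑ j ∈ univ.filter (· ≠ i), w j i * y j) ≤ (∑ j ∈ univ.filter (· ≠ i), w j i * z j) := by
    intro i y z hyz
    apply Finset.sum_le_sum
    intro j hj
    exact mul_le_mul_of_nonneg_left (hyz j) (hw j i (Finset.mem_filter.mp hj).2)
  have hTmono : ∀ y z, (∀ j, y j ≤ z j) → ∀ i, T y i ≤ T z i := by
    intro y z hyz i
    simp only [T]
    split_ifs with h1 h2
    · exact le_refl _
    · exfalso; have := sum_mono i y z hyz; push_neg at h2; linarith
    · norm_num
    · exact le_refl _
  have hT'mono : ∀ y z, (∀ j, y j ≤ z j) → ∀ i, T' y i ≤ T' z i := by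
    intro y z hyz i
    simp only [T']
    split_ifs with h1 h2
    · exact le_refl _
    · norm_num
    · exfalso; have := sum_mono i y z hyz; push_neg at h1; linarith
    · exact le_refl _
  have hxT : ∀ i, x i ≤ T x i := by
    intro i
    simp only [T]
    split_ifs with h
    · rcases hx i with h1 | h1 <;> rw [h1] <;> norm_num
    · rcases hx i with h1 | h1
      · exfalso; have := hpsne i; rw [h1] at this; push_neg at h; linarith
      · rw [h1]
  have hT'x : ∀ i, T' x i ≤ x i := by
    intro i
    simp only [T']
    split_ifs with h
    · rcases hx i with h1 | h1 <;> rw [h1] <;> norm_num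
    · rcases hx i with h1 | h1
      · rw [h1]
      · exfalso; have := hpsne i; rw [h1] at this; push_neg at h; linarith
  -- x ≤ T^[k] x and T^[k] x ≤ T^[k] one
  have hup : ∀ k : ℕ, ∀ i, x i ≤ T^[k] x i ∧ T^[k] x i ≤ T^[k] one i := by
    intro k
    induction k with
    | zero =>
      intro i
      refine ⟨le_refl _, ?_⟩
      simp only [Function.iterate_zero, id_eq]
      rcases hx i with h1 | h1 <;> rw [h1] <;> norm_num [one]
    | succ m ih =>
      intro i
      rw [Function.iterate_succ_apply', Function.iterate_succ_apply']
      constructor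
      · exact le_trans (hxT i) (hTmono x (T^[m] x) (fun j => (ih j).1) i)
      · exact hTmono (T^[m] x) (T^[m] one) (fun j => (ih j).2) i
  have hdown : ∀ k : ℕ, ∀ i, T'^[k] x i ≤ x i ∧ T'^[k] negOne i ≤ T'^[k] x i := by
    intro k
    induction k with
    | zero =>
      intro i
      refine ⟨le_refl _, ?_⟩
      simp only [Function.iterate_zero, id_eq]
      rcases hx i with h1 | h1 <;> rw [h1] <;> norm_num [negOne]
    | succ m ih =>
      intro i
      rw [Function.iterate_succ_apply', Function.iterate_succ_apply']
      constructor
      · exact le_trans (hT'mono (T'^[m] x) x (fun j => (ih j).1) i) (hT'x i)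
      · exact hT'mono (T'^[m] negOne) (T'^[m] x) (fun j => (ih j).2) i
  intro i
  exact ⟨le_trans ((hdown n i).2) ((hdown n i).1), le_trans ((hup n i).1) ((hup n i).2)⟩
end

section
/- Let I be a 3-CNF instance with m clauses and n variables, let ε ∈ (0,1), and let J be the {0,1}-action linear influence game constructed from I and ε as described. Then J has a pure-strategy Nash equilibrium if and only if I has a satisfying truth assignment. -/
open Finset

/-- A pure-strategy Nash equilibrium of a `{0,1}`-action linear influence game. -/
def IsPSNE01 {P : Type*} [Fintype P] [DecidableEq P]
    (w : P → P → ℝ) (b : P → ℝ) (x : P → ℝ) : Prop :=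
  (∀ p, x p = 0 ∨ x p = 1) ∧
    ∀ p, (2 * x p - 1) * ((∑ q ∈ univ.filter (· ≠ p), w q p * x q) - b p) ≥ 0

/-- Weights of the `{0,1}`-action LIG built from a 3-CNF instance: each clause `k`
influences each of its variables `i ∈ V k` with weight `1 - 2 l k i`, and each variable
`i` influences each clause `k ∈ C i` with weight `2 l k i - 1`; all other weights are 0. -/
def threeSatW (n m : ℕ) (V : Fin m → Finset (Fin n)) (l : Fin m → Fin n → ℝ) :
    Fin m ⊕ Fin n → Fin m ⊕ Fin n → ℝ
  | Sum.inl k, Sum.inr i => if i ∈ V k then 1 - 2 * l k i else 0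
  | Sum.inr i, Sum.inl k => if i ∈ V k then 2 * l k i - 1 else 0
  | _, _ => 0

/-- Thresholds of the `{0,1}`-action LIG built from a 3-CNF instance: clause player `k`
has threshold `1 - ε - ∑_{i ∈ V k} (1 - l k i)`; variable player `i` has threshold
`∑_{k ∈ C i} (1 - 2 l k i)`. -/
def threeSatB (n m : ℕ) (V : Fin m → Finset (Fin n)) (l : Fin m → Fin n → ℝ) (ε : ℝ) :
    Fin m ⊕ Fin n → ℝ
  | Sum.inl k => 1 - ε - ∑ i ∈ V k, (1 - l k i)
  | Sum.inr i => ∑ k ∈ univ.filter (fun k => i ∈ V k), (1 - 2 * l k i)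

section Aux
variable {n m : ℕ} (V : Fin m → Finset (Fin n)) (l : Fin m → Fin n → ℝ)

lemma sum_clause (k : Fin m) (x : Fin m ⊕ Fin n → ℝ) :
    ∑ q ∈ univ.filter (· ≠ Sum.inl k), threeSatW n m V l q (Sum.inl k) * x q
      = ∑ i ∈ V k, (2 * l k i - 1) * x (Sum.inr i) := by
  rw [Finset.sum_filter, Fintype.sum_sum_type]
  have h1 : ∀ k' : Fin m, (if (Sum.inl k' : Fin m ⊕ Fin n) ≠ Sum.inl k then
      threeSatW n m V l (Sum.inl k') (Sum.inl k) * x (Sum.inl k') else 0) = 0 := by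
    intro k'; split <;> simp [threeSatW]
  rw [Finset.sum_congr rfl (fun k' _ => h1 k'), Finset.sum_const_zero, zero_add]
  have h2 : ∀ i : Fin n, (if (Sum.inr i : Fin m ⊕ Fin n) ≠ Sum.inl k then
      threeSatW n m V l (Sum.inr i) (Sum.inl k) * x (Sum.inr i) else 0)
      = (if i ∈ V k then (2 * l k i - 1) * x (Sum.inr i) else 0) := by
    intro i; simp only [ne_eq, reduceCtorEq, not_false_iff, if_true, threeSatW]
    split <;> simp
  rw [Finset.sum_congr rfl (fun i _ => h2 i), Finset.sum_ite_mem, univ_inter]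

lemma sum_var (i : Fin n) (x : Fin m ⊕ Fin n → ℝ) :
    ∑ q ∈ univ.filter (· ≠ Sum.inr i), threeSatW n m V l q (Sum.inr i) * x q
      = ∑ k ∈ univ.filter (fun k => i ∈ V k), (1 - 2 * l k i) * x (Sum.inl k) := by
  rw [Finset.sum_filter, Fintype.sum_sum_type]
  have h2 : ∀ i' : Fin n, (if (Sum.inr i' : Fin m ⊕ Fin n) ≠ Sum.inr i then
      threeSatW n m V l (Sum.inr i') (Sum.inr i) * x (Sum.inr i') else 0) = 0 := by
    intro i'; split <;> simp [threeSatW]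
  rw [Finset.sum_congr rfl (fun i' _ => h2 i'), Finset.sum_const_zero, add_zero]
  have h1 : ∀ k : Fin m, (if (Sum.inl k : Fin m ⊕ Fin n) ≠ Sum.inr i then
      threeSatW n m V l (Sum.inl k) (Sum.inr i) * x (Sum.inl k) else 0)
      = (if i ∈ V k then (1 - 2 * l k i) * x (Sum.inl k) else 0) := by
    intro k; simp only [ne_eq, reduceCtorEq, not_false_iff, if_true, threeSatW]
    split <;> simp
  rw [Finset.sum_congr rfl (fun k _ => h1 k), ← Finset.sum_filter]

/-- The key "literal indicator" computation. -/
lemma lit_ind {a b : ℝ} (ha : a = 0 ∨ a = 1) (hb : b = 0 ∨ b = 1) :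
    ((2 * b - 1) * a + (1 - b) = 1 ∧ a = b) ∨ ((2 * b - 1) * a + (1 - b) = 0 ∧ a ≠ b) := by
  rcases ha with h | h <;> rcases hb with h' | h' <;> rw [h, h'] <;> norm_num

end Aux

/-- The LIG built from a 3-CNF instance has a PSNE iff the instance
has a satisfying truth assignment. -/
theorem threeSat_lig_psne_iff_satisfiable (n m : ℕ)
    (V : Fin m → Finset (Fin n)) (hV : ∀ k, (V k).card = 3)
    (l : Fin m → Fin n → ℝ) (hl : ∀ k i, l k i = 0 ∨ l k i = 1)
    (ε : ℝ) (hε0 : 0 < ε) (hε1 : ε < 1) :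
    (∃ x : Fin m ⊕ Fin n → ℝ, IsPSNE01 (threeSatW n m V l) (threeSatB n m V l ε) x)
      ↔
    (∃ t : Fin n → ℝ, (∀ i, t i = 0 ∨ t i = 1) ∧ ∀ k, ∃ i ∈ V k, t i = l k i) := by
  constructor
  · rintro ⟨x, hx01, hxeq⟩
    set t : Fin n → ℝ := fun i => x (Sum.inr i) with ht
    set y : Fin m → ℝ := fun k => x (Sum.inl k) with hy
    have ht01 : ∀ i, t i = 0 ∨ t i = 1 := fun i => hx01 (Sum.inr i)
    have hy01 : ∀ k, y k = 0 ∨ y k = 1 := fun k => hx01 (Sum.inl k)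
    -- rewritten clause conditions
    have hck : ∀ k, (2 * y k - 1) *
        ((∑ i ∈ V k, ((2 * l k i - 1) * t i + (1 - l k i))) - (1 - ε)) ≥ 0 := by
      intro k
      have h := hxeq (Sum.inl k)
      rw [sum_clause] at h
      have e : (∑ i ∈ V k, (2 * l k i - 1) * x (Sum.inr i)) - threeSatB n m V l ε (Sum.inl k)
          = (∑ i ∈ V k, ((2 * l k i - 1) * t i + (1 - l k i))) - (1 - ε) := by
        rw [Finset.sum_add_distrib]; simp only [threeSatB]; ring
      rwa [e] at h
    -- rewritten variable conditions
    have hvi : ∀ i, (2 * t i - 1) *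
        (∑ k ∈ univ.filter (fun k => i ∈ V k), (1 - 2 * l k i) * (y k - 1)) ≥ 0 := by
      intro i
      have h := hxeq (Sum.inr i)
      rw [sum_var] at h
      have e : (∑ k ∈ univ.filter (fun k => i ∈ V k), (1 - 2 * l k i) * x (Sum.inl k))
          - threeSatB n m V l ε (Sum.inr i)
          = ∑ k ∈ univ.filter (fun k => i ∈ V k), (1 - 2 * l k i) * (y k - 1) := by
        simp only [threeSatB, ← Finset.sum_sub_distrib]
        exact Finset.sum_congr rfl (fun k _ => by ring)
      rwa [e] at h
    -- indicator facts
    have hgnn : ∀ k, ∀ i ∈ V k, 0 ≤ (2 * l k i - 1) * t i + (1 - l k i) := by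
      intro k i _
      rcases lit_ind (ht01 i) (hl k i) with ⟨h, _⟩ | ⟨h, _⟩ <;> rw [h] <;> norm_num
    -- clauses played 0 have all literals false
    have hfalse : ∀ k, y k = 0 → ∀ i ∈ V k, t i ≠ l k i := by
      intro k hk i hi hti
      have h := hck k
      rw [hk] at h
      have hs : (∑ i ∈ V k, ((2 * l k i - 1) * t i + (1 - l k i))) ≤ 1 - ε := by nlinarith
      have h1 : (1 : ℝ) ≤ ∑ i ∈ V k, ((2 * l k i - 1) * t i + (1 - l k i)) := by
        have := Finset.single_le_sum (hgnn k) hi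
        rcases lit_ind (ht01 i) (hl k i) with ⟨h', _⟩ | ⟨_, h'⟩
        · linarith [this, h'.ge] 
        · exact absurd hti h'
      linarith
    -- all clause players play 1
    have hyall : ∀ k, y k = 1 := by
      by_contra hc
      push_neg at hc
      obtain ⟨k₀, hk₀⟩ := hc
      have hk₀0 : y k₀ = 0 := (hy01 k₀).resolve_right hk₀
      -- the double sum
      have hterm : ∀ k : Fin m,
          ∑ i ∈ V k, (2 * t i - 1) * ((1 - 2 * l k i) * (y k - 1)) ≤ 0 := by
        intro k
        rcases hy01 k with hk | hk
        · have : ∀ i ∈ V k, (2 * t i - 1) * ((1 - 2 * l k i) * (y k - 1)) = -1 := by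
            intro i hi
            have hne := hfalse k hk i hi
            rw [hk]
            rcases ht01 i with h1 | h1 <;> rcases hl k i with h2 | h2 <;>
              rw [h1, h2] <;> first | (exact absurd (h1.trans h2.symm) hne) | norm_num
          rw [Finset.sum_congr rfl this, Finset.sum_const, hV k]
          norm_num
        · have : ∀ i ∈ V k, (2 * t i - 1) * ((1 - 2 * l k i) * (y k - 1)) = 0 := by
            intro i _; rw [hk]; ring
          rw [Finset.sum_congr rfl this, Finset.sum_const_zero]
      have hterm0 : ∑ i ∈ V k₀, (2 * t i - 1) * ((1 - 2 * l k₀ i) * (y k₀ - 1)) = -3 := by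
        have : ∀ i ∈ V k₀, (2 * t i - 1) * ((1 - 2 * l k₀ i) * (y k₀ - 1)) = -1 := by
          intro i hi
          have hne := hfalse k₀ hk₀0 i hi
          rw [hk₀0]
          rcases ht01 i with h1 | h1 <;> rcases hl k₀ i with h2 | h2 <;>
            rw [h1, h2] <;> first | (exact absurd (h1.trans h2.symm) hne) | norm_num
        rw [Finset.sum_congr rfl this, Finset.sum_const, hV k₀]
        norm_num
      -- total sum is nonneg
      have hnn : (0 : ℝ) ≤ ∑ i : Fin n,
          ∑ k ∈ univ.filter (fun k => i ∈ V k), (2 * t i - 1) * ((1 - 2 * l k i) * (y k - 1)) := by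
        apply Finset.sum_nonneg
        intro i _
        have := hvi i
        rw [← Finset.mul_sum] at *
        calc (0:ℝ) ≤ (2 * t i - 1) * ∑ k ∈ univ.filter (fun k => i ∈ V k),
            (1 - 2 * l k i) * (y k - 1) := this
          _ = _ := by rw [Finset.mul_sum]
      -- swap the double sum
      have hswap : (∑ i : Fin n,
          ∑ k ∈ univ.filter (fun k => i ∈ V k), (2 * t i - 1) * ((1 - 2 * l k i) * (y k - 1)))
          = ∑ k : Fin m, ∑ i ∈ V k, (2 * t i - 1) * ((1 - 2 * l k i) * (y k - 1)) := by
        simp only [Finset.sum_filter]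
        rw [Finset.sum_comm]
        refine Finset.sum_congr rfl (fun k _ => ?_)
        rw [← Finset.sum_filter, Finset.filter_univ_mem]
      rw [hswap] at hnn
      have hle : (∑ k : Fin m, ∑ i ∈ V k, (2 * t i - 1) * ((1 - 2 * l k i) * (y k - 1))) ≤ -3 := by
        rw [← Finset.add_sum_erase _ _ (Finset.mem_univ k₀), hterm0]
        have : (∑ k ∈ univ.erase k₀, ∑ i ∈ V k, (2 * t i - 1) * ((1 - 2 * l k i) * (y k - 1))) ≤ 0 :=
          Finset.sum_nonpos (fun k _ => hterm k)
        linarith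
      linarith
    -- extract the satisfying assignment
    refine ⟨t, ht01, fun k => ?_⟩
    by_contra hc
    push_neg at hc
    have h := hck k
    rw [hyall k] at h
    have hz : (∑ i ∈ V k, ((2 * l k i - 1) * t i + (1 - l k i))) = 0 := by
      apply Finset.sum_eq_zero
      intro i hi
      rcases lit_ind (ht01 i) (hl k i) with ⟨_, h'⟩ | ⟨h', _⟩
      · exact absurd h' (hc i hi)
      · exact h'
    rw [hz] at h
    nlinarith
  · rintro ⟨t, ht01, hsat⟩
    refine ⟨Sum.elim (fun _ => 1) t, fun p => ?_, fun p => ?_⟩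
    · rcases p with k | i
      · exact Or.inr rfl
      · exact ht01 i
    · rcases p with k | i
      · rw [sum_clause]
        simp only [Sum.elim_inl, Sum.elim_inr]
        have e : (∑ i ∈ V k, (2 * l k i - 1) * t i) - threeSatB n m V l ε (Sum.inl k)
            = (∑ i ∈ V k, ((2 * l k i - 1) * t i + (1 - l k i))) - (1 - ε) := by
          rw [Finset.sum_add_distrib]; simp only [threeSatB]; ring
        rw [e]
        obtain ⟨i, hi, hti⟩ := hsat k
        have hgnn : ∀ j ∈ V k, 0 ≤ (2 * l k j - 1) * t j + (1 - l k j) := by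
          intro j _
          rcases lit_ind (ht01 j) (hl k j) with ⟨h, _⟩ | ⟨h, _⟩ <;> rw [h] <;> norm_num
        have h1 : (1 : ℝ) ≤ ∑ j ∈ V k, ((2 * l k j - 1) * t j + (1 - l k j)) := by
          have := Finset.single_le_sum hgnn hi
          rcases lit_ind (ht01 i) (hl k i) with ⟨h', _⟩ | ⟨_, h'⟩
          · linarith [this, h'.ge]
          · exact absurd hti h'
        nlinarith
      · rw [sum_var]
        simp only [Sum.elim_inl, Sum.elim_inr]
        have e : (∑ k ∈ univ.filter (fun k => i ∈ V k), (1 - 2 * l k i) * 1)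
            - threeSatB n m V l ε (Sum.inr i) = 0 := by
          simp [threeSatB]
        rw [e, mul_zero]
end

section
/- Let I be a 3-CNF instance with m clauses and n variables, let ε ∈ (0,1), and let J be the {0,1}-action linear influence game constructed from I and ε as described. Then at every pure-strategy Nash equilibrium of J, every clause player plays 1, and moreover for every clause k there exists a variable i ∈ V_k whose player's action x_i equals l_{k,i} (so the variable players' actions, read as a truth assignment, satisfy every clause). -/
open Finset

lemma threeSat_clause_sum (n m : ℕ) (V : Fin m → Finset (Fin n)) (l : Fin m → Fin n → ℝ)
    (x : Fin m ⊕ Fin n → ℝ) (k : Fin m) :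
    (∑ q ∈ univ.filter (· ≠ Sum.inl k), threeSatW n m V l q (Sum.inl k) * x q)
      = ∑ i ∈ V k, (2 * l k i - 1) * x (Sum.inr i) := by
  rw [filter_ne', Finset.sum_erase _ (by simp [threeSatW])]
  rw [Fintype.sum_sum_type]
  simp [threeSatW, ite_mul, Finset.sum_ite_mem]

lemma threeSat_var_sum (n m : ℕ) (V : Fin m → Finset (Fin n)) (l : Fin m → Fin n → ℝ)
    (x : Fin m ⊕ Fin n → ℝ) (i : Fin n) :
    (∑ q ∈ univ.filter (· ≠ Sum.inr i), threeSatW n m V l q (Sum.inr i) * x q)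
      = ∑ k ∈ univ.filter (fun k => i ∈ V k), (1 - 2 * l k i) * x (Sum.inl k) := by
  rw [filter_ne', Finset.sum_erase _ (by simp [threeSatW])]
  rw [Fintype.sum_sum_type]
  simp [threeSatW, ite_mul, Finset.sum_filter]

/-- At every PSNE of the LIG built from a 3-CNF instance, every clause player
plays 1, and for every clause some variable in it takes the action matching its literal sign,
so the variable players' actions form a satisfying truth assignment. -/
theorem threeSat_lig_psne_clauses_play_one (n m : ℕ)
    (V : Fin m → Finset (Fin n)) (hV : ∀ k, (V k).card = 3)
    (l : Fin m → Fin n → ℝ) (hl : ∀ k i, l k i = 0 ∨ l k i = 1)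
    (ε : ℝ) (hε0 : 0 < ε) (hε1 : ε < 1)
    (x : Fin m ⊕ Fin n → ℝ)
    (hx : IsPSNE01 (threeSatW n m V l) (threeSatB n m V l ε) x) :
    (∀ k : Fin m, x (Sum.inl k) = 1) ∧
    (∀ k : Fin m, ∃ i ∈ V k, x (Sum.inr i) = l k i) := by
  obtain ⟨h01, heq⟩ := hx
  -- Rewritten clause equilibrium condition
  have hclause : ∀ k : Fin m, (2 * x (Sum.inl k) - 1) *
      ((∑ i ∈ V k, ((2 * l k i - 1) * x (Sum.inr i) + (1 - l k i))) - 1 + ε) ≥ 0 := by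
    intro k
    have h := heq (Sum.inl k)
    rw [threeSat_clause_sum] at h
    have hb : threeSatB n m V l ε (Sum.inl k) = 1 - ε - ∑ i ∈ V k, (1 - l k i) := rfl
    rw [hb] at h
    have : (∑ i ∈ V k, ((2 * l k i - 1) * x (Sum.inr i) + (1 - l k i))) - 1 + ε
        = (∑ i ∈ V k, (2 * l k i - 1) * x (Sum.inr i)) - (1 - ε - ∑ i ∈ V k, (1 - l k i)) := by
      rw [Finset.sum_add_distrib]; ring
    rw [this]; exact h
  -- Rewritten variable equilibrium condition
  have hvar : ∀ i : Fin n, (2 * x (Sum.inr i) - 1) *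
      (∑ k ∈ univ.filter (fun k => i ∈ V k), (1 - 2 * l k i) * (x (Sum.inl k) - 1)) ≥ 0 := by
    intro i
    have h := heq (Sum.inr i)
    rw [threeSat_var_sum] at h
    have hb : threeSatB n m V l ε (Sum.inr i)
        = ∑ k ∈ univ.filter (fun k => i ∈ V k), (1 - 2 * l k i) := rfl
    rw [hb] at h
    have : (∑ k ∈ univ.filter (fun k => i ∈ V k), (1 - 2 * l k i) * (x (Sum.inl k) - 1))
        = (∑ k ∈ univ.filter (fun k => i ∈ V k), (1 - 2 * l k i) * x (Sum.inl k))
          - ∑ k ∈ univ.filter (fun k => i ∈ V k), (1 - 2 * l k i) := by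
      rw [← Finset.sum_sub_distrib]; congr 1; ext k; ring
    rw [this]; exact h
  -- terms are nonnegative
  have hterm0 : ∀ (k : Fin m) (i : Fin n),
      0 ≤ (2 * l k i - 1) * x (Sum.inr i) + (1 - l k i) := by
    intro k i
    rcases hl k i with a | a <;> rcases h01 (Sum.inr i) with b | b <;> rw [a, b] <;> norm_num
  -- clause plays 1 if some variable agrees
  have key1 : ∀ k : Fin m, (∃ i ∈ V k, x (Sum.inr i) = l k i) → x (Sum.inl k) = 1 := by
    intro k ⟨i, hi, hagree⟩
    have ht1 : (2 * l k i - 1) * x (Sum.inr i) + (1 - l k i) = 1 := by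
      rcases hl k i with a | a <;> rw [hagree, a] <;> norm_num
    have hsum : (1 : ℝ) ≤ ∑ j ∈ V k, ((2 * l k j - 1) * x (Sum.inr j) + (1 - l k j)) := by
      have h2 := Finset.single_le_sum (fun j _ => hterm0 k j) hi
      rw [ht1] at h2; exact h2
    have h := hclause k
    rcases h01 (Sum.inl k) with b | b
    · rw [b] at h; nlinarith
    · exact b
  -- clause plays 0 if no variable agrees
  have key0 : ∀ k : Fin m, (∀ i ∈ V k, x (Sum.inr i) ≠ l k i) → x (Sum.inl k) = 0 := by
    intro k hno
    have hsum : (∑ j ∈ V k, ((2 * l k j - 1) * x (Sum.inr j) + (1 - l k j))) = 0 := by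
      apply Finset.sum_eq_zero
      intro j hj
      rcases hl k j with a | a <;>
        rcases h01 (Sum.inr j) with b | b
      · exact absurd (b.trans a.symm) (hno j hj)
      · rw [a, b]; norm_num
      · rw [a, b]; norm_num
      · exact absurd (b.trans a.symm) (hno j hj)
    have h := hclause k
    rw [hsum] at h
    rcases h01 (Sum.inl k) with b | b
    · exact b
    · rw [b] at h; nlinarith
  -- every clause is satisfied
  have sat : ∀ k : Fin m, ∃ i ∈ V k, x (Sum.inr i) = l k i := by
    intro k
    by_contra hcon
    push_neg at hcon
    have hk0 : x (Sum.inl k) = 0 := key0 k hcon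
    obtain ⟨i, hi⟩ : (V k).Nonempty := by
      rw [← Finset.card_pos, hV k]; norm_num
    have hne := hcon i hi
    have hkmem : k ∈ univ.filter (fun k' => i ∈ V k') := by simp [hi]
    have hT := hvar i
    have hxle1 : ∀ k' : Fin m, x (Sum.inl k') ≤ 1 := by
      intro k'; rcases h01 (Sum.inl k') with b | b <;> rw [b] <;> norm_num
    rcases hl k i with a | a
    · -- l k i = 0, so x_i = 1
      have hx1 : x (Sum.inr i) = 1 := by
        rcases h01 (Sum.inr i) with b | b
        · exfalso; apply hne; rw [a, b]
        · exact b
      -- each term ≤ 0, term at k = -1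
      have hnn : ∀ k' ∈ univ.filter (fun k' => i ∈ V k'),
          0 ≤ -((1 - 2 * l k' i) * (x (Sum.inl k') - 1)) := by
        intro k' hk'
        simp only [mem_filter, mem_univ, true_and] at hk'
        rcases hl k' i with a' | a'
        · rw [a']; have := hxle1 k'; nlinarith
        · have hx1' : x (Sum.inl k') = 1 := key1 k' ⟨i, hk', by rw [hx1, a']⟩
          rw [a', hx1']; norm_num
      have hft : -((1 - 2 * l k i) * (x (Sum.inl k) - 1)) = 1 := by
        rw [a, hk0]; norm_num
      have : (1 : ℝ) ≤ ∑ k' ∈ univ.filter (fun k' => i ∈ V k'),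
          -((1 - 2 * l k' i) * (x (Sum.inl k') - 1)) := by
        have h2 := Finset.single_le_sum hnn hkmem
        rw [hft] at h2; exact h2
      rw [Finset.sum_neg_distrib] at this
      rw [hx1] at hT
      nlinarith
    · -- l k i = 1, so x_i = 0
      have hx0 : x (Sum.inr i) = 0 := by
        rcases h01 (Sum.inr i) with b | b
        · exact b
        · exfalso; apply hne; rw [a, b]
      have hnn : ∀ k' ∈ univ.filter (fun k' => i ∈ V k'),
          0 ≤ (1 - 2 * l k' i) * (x (Sum.inl k') - 1) := by
        intro k' hk'
        simp only [mem_filter, mem_univ, true_and] at hk'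
        rcases hl k' i with a' | a'
        · have hx1' : x (Sum.inl k') = 1 := key1 k' ⟨i, hk', by rw [hx0, a']⟩
          rw [a', hx1']; norm_num
        · rw [a']; have := hxle1 k'; nlinarith
      have hft : (1 - 2 * l k i) * (x (Sum.inl k) - 1) = 1 := by
        rw [a, hk0]; norm_num
      have : (1 : ℝ) ≤ ∑ k' ∈ univ.filter (fun k' => i ∈ V k'),
          (1 - 2 * l k' i) * (x (Sum.inl k') - 1) := by
        have h2 := Finset.single_le_sum hnn hkmem
        rw [hft] at h2; exact h2
      rw [hx0] at hT
      nlinarith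
  exact ⟨fun k => key1 k (sat k), sat⟩
end

section
/- Let I be a 3-CNF instance with m clauses and n variables, let ε ∈ (0,1), and let J be the {0,1}-action linear influence game constructed from I and ε as described. Then the number of pure-strategy Nash equilibria of J equals the number of satisfying truth assignments of I; indeed, a joint action x of J is a PSNE if and only if every clause player plays 1 in x and the variable players' actions, read as a truth assignment, satisfy I. -/
open Finset

lemma sum_filter_ne_self {P : Type*} [Fintype P] [DecidableEq P] (p : P) (f : P → ℝ)
    (hf : f p = 0) : ∑ q ∈ univ.filter (· ≠ p), f q = ∑ q, f q := by
  rw [filter_ne', sum_erase _ hf]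

/-- The clause player's "score" in terms of satisfied literals. -/
lemma clause_score (n m : ℕ) (V : Fin m → Finset (Fin n)) (l : Fin m → Fin n → ℝ)
    (hl : ∀ k i, l k i = 0 ∨ l k i = 1) (ε : ℝ)
    (x : Fin m ⊕ Fin n → ℝ) (h01 : ∀ p, x p = 0 ∨ x p = 1) (k : Fin m) :
    (∑ q ∈ univ.filter (· ≠ Sum.inl k), threeSatW n m V l q (Sum.inl k) * x q)
      - threeSatB n m V l ε (Sum.inl k)
    = (∑ i ∈ V k, if x (Sum.inr i) = l k i then (1:ℝ) else 0) - 1 + ε := by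
  rw [sum_filter_ne_self _ _ (by simp [threeSatW])]
  rw [Fintype.sum_sum_type]
  have h1 : (∑ k' : Fin m, threeSatW n m V l (Sum.inl k') (Sum.inl k) * x (Sum.inl k')) = 0 := by
    simp [threeSatW]
  have h2 : (∑ i : Fin n, threeSatW n m V l (Sum.inr i) (Sum.inl k) * x (Sum.inr i))
      = ∑ i ∈ V k, (2 * l k i - 1) * x (Sum.inr i) := by
    simp only [threeSatW, ite_mul, zero_mul]
    rw [sum_ite_mem, univ_inter]
  rw [h1, h2, threeSatB, zero_add]
  have h3 : ∀ i ∈ V k, (2 * l k i - 1) * x (Sum.inr i) + (1 - l k i)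
      = if x (Sum.inr i) = l k i then (1:ℝ) else 0 := by
    intro i _
    rcases hl k i with h | h <;> rcases h01 (Sum.inr i) with h' | h' <;>
      rw [h, h'] <;> norm_num
  calc (∑ i ∈ V k, (2 * l k i - 1) * x (Sum.inr i)) - (1 - ε - ∑ i ∈ V k, (1 - l k i))
      = (∑ i ∈ V k, ((2 * l k i - 1) * x (Sum.inr i) + (1 - l k i))) - 1 + ε := by
        rw [sum_add_distrib]; ring
    _ = (∑ i ∈ V k, if x (Sum.inr i) = l k i then (1:ℝ) else 0) - 1 + ε := by
        rw [sum_congr rfl h3]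

/-- The variable player's "score". -/
lemma var_score (n m : ℕ) (V : Fin m → Finset (Fin n)) (l : Fin m → Fin n → ℝ) (ε : ℝ)
    (x : Fin m ⊕ Fin n → ℝ) (i : Fin n) :
    (∑ q ∈ univ.filter (· ≠ Sum.inr i), threeSatW n m V l q (Sum.inr i) * x q)
      - threeSatB n m V l ε (Sum.inr i)
    = ∑ k ∈ univ.filter (fun k => i ∈ V k), (1 - 2 * l k i) * (x (Sum.inl k) - 1) := by
  rw [sum_filter_ne_self _ _ (by simp [threeSatW])]
  rw [Fintype.sum_sum_type]
  have h1 : (∑ i' : Fin n, threeSatW n m V l (Sum.inr i') (Sum.inr i) * x (Sum.inr i')) = 0 := by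
    simp [threeSatW]
  have h2 : (∑ k : Fin m, threeSatW n m V l (Sum.inl k) (Sum.inr i) * x (Sum.inl k))
      = ∑ k ∈ univ.filter (fun k => i ∈ V k), (1 - 2 * l k i) * x (Sum.inl k) := by
    simp only [threeSatW, ite_mul, zero_mul]
    rw [sum_filter]
  rw [h1, h2, threeSatB, add_zero, ← sum_sub_distrib]
  exact sum_congr rfl fun k _ => by ring

/-- The main characterization of PSNE of the constructed game. -/
lemma psne_iff (n m : ℕ)
    (V : Fin m → Finset (Fin n)) (hV : ∀ k, (V k).card = 3)
    (l : Fin m → Fin n → ℝ) (hl : ∀ k i, l k i = 0 ∨ l k i = 1)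
    (ε : ℝ) (hε0 : 0 < ε) (hε1 : ε < 1)
    (x : Fin m ⊕ Fin n → ℝ) (h01 : ∀ p, x p = 0 ∨ x p = 1) :
    IsPSNE01 (threeSatW n m V l) (threeSatB n m V l ε) x ↔
      (∀ k : Fin m, x (Sum.inl k) = 1) ∧
        ∀ k : Fin m, ∃ i ∈ V k, x (Sum.inr i) = l k i := by
  constructor
  · rintro ⟨-, h2⟩
    -- if clause k is satisfied, its score is ≥ ε > 0
    have scorepos : ∀ k : Fin m, (∃ i ∈ V k, x (Sum.inr i) = l k i) →
        (∑ q ∈ univ.filter (· ≠ Sum.inl k), threeSatW n m V l q (Sum.inl k) * x q)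
          - threeSatB n m V l ε (Sum.inl k) > 0 := by
      intro k ⟨i, hi, hxi⟩
      rw [clause_score n m V l hl ε x h01 k]
      have hsum : (1:ℝ) ≤ ∑ i ∈ V k, if x (Sum.inr i) = l k i then (1:ℝ) else 0 := by
        have := single_le_sum (f := fun i => if x (Sum.inr i) = l k i then (1:ℝ) else 0)
          (fun j _ => by positivity) hi
        simpa [hxi] using this
      linarith
    have sat1 : ∀ k : Fin m, (∃ i ∈ V k, x (Sum.inr i) = l k i) → x (Sum.inl k) = 1 := by
      intro k hk
      have hs := scorepos k hk
      have hk2 := h2 (Sum.inl k)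
      rcases h01 (Sum.inl k) with h | h
      · rw [h] at hk2; nlinarith
      · exact h
    have unsat0 : ∀ k : Fin m, ¬(∃ i ∈ V k, x (Sum.inr i) = l k i) → x (Sum.inl k) = 0 := by
      intro k hk
      have hscore : (∑ q ∈ univ.filter (· ≠ Sum.inl k), threeSatW n m V l q (Sum.inl k) * x q)
          - threeSatB n m V l ε (Sum.inl k) = ε - 1 := by
        rw [clause_score n m V l hl ε x h01 k]
        have : (∑ i ∈ V k, if x (Sum.inr i) = l k i then (1:ℝ) else 0) = 0 := by
          refine sum_eq_zero fun i hi => if_neg fun h => hk ⟨i, hi, h⟩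
        rw [this]; ring
      have hk2 := h2 (Sum.inl k)
      rw [hscore] at hk2
      rcases h01 (Sum.inl k) with h | h
      · exact h
      · rw [h] at hk2; nlinarith
    -- all clauses are satisfied
    have allsat : ∀ k : Fin m, ∃ i ∈ V k, x (Sum.inr i) = l k i := by
      by_contra hcon
      push_neg at hcon
      obtain ⟨k0, hk0⟩ := hcon
      obtain ⟨i0, hi0⟩ := card_pos.mp (by rw [hV k0]; norm_num)
      have hvar := h2 (Sum.inr i0)
      rw [var_score n m V l ε x i0] at hvar
      rw [mul_sum] at hvar
      set F := univ.filter (fun k => i0 ∈ V k) with hF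
      have hk0F : k0 ∈ F := mem_filter.mpr ⟨mem_univ _, hi0⟩
      -- bound each summand
      have hbound : ∀ k ∈ F, (2 * x (Sum.inr i0) - 1) * ((1 - 2 * l k i0) * (x (Sum.inl k) - 1))
          ≤ if k = k0 then (-1 : ℝ) else 0 := by
        intro k hkF
        have hiV : i0 ∈ V k := (mem_filter.mp hkF).2
        by_cases hkk : k = k0
        · subst hkk
          rw [if_pos rfl]
          have hx0 : x (Sum.inl k) = 0 := unsat0 k (by simpa using hk0)
          have hne : x (Sum.inr i0) ≠ l k i0 := fun h => (hk0 i0 hi0 h).elim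
          rcases hl k i0 with h | h <;> rcases h01 (Sum.inr i0) with h' | h' <;>
            rw [h, h', hx0] <;> first | exact absurd (h'.trans h.symm) hne | norm_num
        · rw [if_neg hkk]
          rcases h01 (Sum.inl k) with hxk | hxk
          · have hne : x (Sum.inr i0) ≠ l k i0 := by
              intro h
              have := sat1 k ⟨i0, hiV, h⟩
              rw [hxk] at this; norm_num at this
            rcases hl k i0 with h | h <;> rcases h01 (Sum.inr i0) with h' | h' <;>
              rw [h, h', hxk] <;> first | exact absurd (h'.trans h.symm) hne | norm_num
          · rw [hxk]; ring_nf; norm_num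
      have hsum := sum_le_sum hbound
      rw [sum_ite_eq' F k0 (fun _ => (-1:ℝ))] at hsum
      rw [if_pos hk0F] at hsum
      linarith
    exact ⟨fun k => sat1 k (allsat k), allsat⟩
  · rintro ⟨hc, hs⟩
    refine ⟨h01, fun p => ?_⟩
    cases p with
    | inl k =>
      rw [clause_score n m V l hl ε x h01 k, hc k]
      obtain ⟨i, hi, hxi⟩ := hs k
      have hsum : (1:ℝ) ≤ ∑ i ∈ V k, if x (Sum.inr i) = l k i then (1:ℝ) else 0 := by
        have := single_le_sum (f := fun i => if x (Sum.inr i) = l k i then (1:ℝ) else 0)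
          (fun j _ => by positivity) hi
        simpa [hxi] using this
      nlinarith
    | inr i =>
      rw [var_score n m V l ε x i]
      have : (∑ k ∈ univ.filter (fun k => i ∈ V k), (1 - 2 * l k i) * (x (Sum.inl k) - 1)) = 0 :=
        sum_eq_zero fun k _ => by rw [hc k]; ring
      rw [this, mul_zero]

/-- A `{0,1}` joint action of the LIG built from a 3-CNF instance is a PSNE iff
every clause player plays 1 and the variable players' actions, read as a truth assignment,
satisfy the instance; consequently the number of PSNE of the game equals the number of
satisfying truth assignments. -/
theorem threeSat_lig_psne_count (n m : ℕ)
    (V : Fin m → Finset (Fin n)) (hV : ∀ k, (V k).card = 3)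
    (l : Fin m → Fin n → ℝ) (hl : ∀ k i, l k i = 0 ∨ l k i = 1)
    (ε : ℝ) (hε0 : 0 < ε) (hε1 : ε < 1) :
    (∀ x : Fin m ⊕ Fin n → ℝ, (∀ p, x p = 0 ∨ x p = 1) →
        (IsPSNE01 (threeSatW n m V l) (threeSatB n m V l ε) x ↔
          (∀ k : Fin m, x (Sum.inl k) = 1) ∧
            ∀ k : Fin m, ∃ i ∈ V k, x (Sum.inr i) = l k i)) ∧
    Nat.card {x : Fin m ⊕ Fin n → ℝ //
        IsPSNE01 (threeSatW n m V l) (threeSatB n m V l ε) x}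
      = Nat.card {t : Fin n → ℝ //
          (∀ i, t i = 0 ∨ t i = 1) ∧ ∀ k, ∃ i ∈ V k, t i = l k i} := by
  have key := psne_iff n m V hV l hl ε hε0 hε1
  refine ⟨key, Nat.card_congr ?_⟩
  refine
    { toFun := fun x => ⟨fun i => x.1 (Sum.inr i), ?_⟩
      invFun := fun t => ⟨Sum.elim (fun _ : Fin m => (1:ℝ)) t.1, ?_⟩
      left_inv := ?_
      right_inv := ?_ }
  · obtain ⟨hc, hs⟩ := (key x.1 x.2.1).mp x.2
    exact ⟨fun i => x.2.1 (Sum.inr i), hs⟩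
  · have h01 : ∀ p, Sum.elim (fun _ : Fin m => (1:ℝ)) t.1 p = 0 ∨ Sum.elim (fun _ : Fin m => (1:ℝ)) t.1 p = 1 := by
      intro p; cases p with
      | inl k => exact Or.inr rfl
      | inr i => exact t.2.1 i
    exact (key _ h01).mpr ⟨fun k => rfl, fun k => t.2.2 k⟩
  · rintro ⟨x, hx⟩
    refine Subtype.ext (funext fun p => ?_)
    cases p with
    | inl k => exact (((key x hx.1).mp hx).1 k).symm
    | inr i => rfl
  · rintro ⟨t, ht⟩
    rfl
end

section
/- Let a_1, …, a_n and W be positive integers. Consider the {0,1}-action linear influence game on the players v_0, v_1, …, v_n, where the weight from v_0 to each v_i (1 ≤ i ≤ n) is 1, the weight from each v_i to v_0 is −a_i, all other weights are 0, the threshold of v_0 is −W, and the threshold of each v_i is 1. Then at every pure-strategy Nash equilibrium of this game, v_0 plays 1, and the number of pure-strategy Nash equilibria of this game equals the number of vectors x ∈ {0,1}^n with Σ_{i=1}^n a_i x_i ≤ W (the number of feasible 0-1 knapsack solutions). -/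
open Finset

/-- Weights of the star-shaped `{0,1}`-action LIG built from a knapsack instance:
the center `v₀` (encoded `none`) influences each leaf `vᵢ` (encoded `some i`) with
weight 1, and each leaf `vᵢ` influences the center with weight `-aᵢ`. -/
def knapsackW (n : ℕ) (a : Fin n → ℕ) : Option (Fin n) → Option (Fin n) → ℝ
  | none, some _ => 1
  | some i, none => -(a i : ℝ)
  | _, _ => 0

/-- Thresholds of the star-shaped `{0,1}`-action LIG built from a knapsack instance:
the center has threshold `-W`, and every leaf has threshold 1. -/
def knapsackB (n : ℕ) (W : ℕ) : Option (Fin n) → ℝ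
  | none => -(W : ℝ)
  | some _ => 1

lemma filter_ne_eq_erase {P : Type*} [Fintype P] [DecidableEq P] (p : P) :
    univ.filter (· ≠ p) = univ.erase p := by
  ext q; simp [and_comm]

lemma sum_into_leaf (n : ℕ) (a : Fin n → ℕ) (x : Option (Fin n) → ℝ) (i : Fin n) :
    (∑ q ∈ univ.filter (· ≠ some i), knapsackW n a q (some i) * x q) = x none := by
  rw [filter_ne_eq_erase, Finset.sum_erase _ (by simp [knapsackW])]
  rw [Fintype.sum_option]
  simp [knapsackW]

lemma sum_into_center (n : ℕ) (a : Fin n → ℕ) (x : Option (Fin n) → ℝ) :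
    (∑ q ∈ univ.filter (· ≠ (none : Option (Fin n))), knapsackW n a q none * x q)
      = ∑ i, -((a i : ℝ) * x (some i)) := by
  rw [filter_ne_eq_erase, Finset.sum_erase _ (by simp [knapsackW])]
  rw [Fintype.sum_option]
  simp [knapsackW, mul_assoc]

lemma psne_iff_s12 (n : ℕ) (a : Fin n → ℕ) (W : ℕ) (hW : 0 < W) (x : Option (Fin n) → ℝ) :
    IsPSNE01 (knapsackW n a) (knapsackB n W) x ↔
      x none = 1 ∧ (∀ i, x (some i) = 0 ∨ x (some i) = 1) ∧
        (∑ i, (a i : ℝ) * x (some i)) ≤ (W : ℝ) := by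
  constructor
  · rintro ⟨h01, hne⟩
    have hnone : x none = 1 := by
      rcases h01 none with h0 | h1
      · exfalso
        have hleaf : ∀ i, x (some i) = 0 := by
          intro i
          have := hne (some i)
          rw [sum_into_leaf, h0] at this
          simp [knapsackB] at this
          rcases h01 (some i) with h | h
          · exact h
          · exfalso; rw [h] at this; norm_num at this
        have := hne none
        rw [sum_into_center, h0] at this
        simp [hleaf, knapsackB] at this
        omega
      · exact h1
    refine ⟨hnone, fun i => h01 (some i), ?_⟩
    have := hne none
    rw [sum_into_center, hnone] at this
    simp [knapsackB, Finset.sum_neg_distrib] at this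
    linarith [this]
  · rintro ⟨hnone, h01, hsum⟩
    constructor
    · intro p
      cases p with
      | none => right; exact hnone
      | some i => exact h01 i
    · intro p
      cases p with
      | none =>
        rw [sum_into_center, hnone]
        simp [knapsackB]
        nlinarith [hsum]
      | some i =>
        rw [sum_into_leaf, hnone]
        simp [knapsackB]

/-- In the star LIG built from a knapsack instance, the center plays 1 at
every PSNE, and the number of PSNE equals the number of feasible 0-1 knapsack solutions. -/
theorem knapsack_star_lig (n : ℕ) (a : Fin n → ℕ) (ha : ∀ i, 0 < a i)
    (W : ℕ) (hW : 0 < W) :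
    (∀ x : Option (Fin n) → ℝ,
        IsPSNE01 (knapsackW n a) (knapsackB n W) x → x none = 1) ∧
    Nat.card {x : Option (Fin n) → ℝ // IsPSNE01 (knapsackW n a) (knapsackB n W) x}
      = Nat.card {x : Fin n → ℝ //
          (∀ i, x i = 0 ∨ x i = 1) ∧ (∑ i, (a i : ℝ) * x i) ≤ (W : ℝ)} := by
  constructor
  · intro x hx
    exact ((psne_iff_s12 n a W hW x).mp hx).1
  · apply Nat.card_congr
    refine ⟨fun x => ⟨fun i => x.1 (some i),
        ((psne_iff_s12 n a W hW x.1).mp x.2).2⟩,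
      fun y => ⟨fun o => o.elim 1 y.1,
        (psne_iff_s12 n a W hW _).mpr ⟨rfl, fun i => y.2.1 i, y.2.2⟩⟩,
      fun x => ?_, fun y => rfl⟩
    apply Subtype.ext
    funext o
    cases o with
    | none => exact (((psne_iff_s12 n a W hW x.1).mp x.2).1).symm
    | some i => rfl
end

section
/- Let G be a linear influence game with player set V, weights w and thresholds b, and suppose V is partitioned into pairwise disjoint nonempty sets S, V_1, …, V_k (k ≥ 2) such that w_{uv} = 0 whenever u ∈ V_p and v ∈ V_q with p ≠ q (i.e., S is a vertex separator). For each p, define the linear influence game G_p' on player set V_p ∪ S whose weights are those of G restricted to pairs in V_p ∪ S, except that every weight into a node of S is set to 0, and whose thresholds are b_j for j ∈ V_p and 0 for j ∈ S (so each node of S is indifferent in G_p'). Then for every pure-strategy Nash equilibrium x of G and every p ∈ {1, …, k}, the restriction of x to V_p ∪ S is a pure-strategy Nash equilibrium of G_p'. -/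
open Finset

/-- If `S` is a vertex separator of an LIG `G` (removing `S` disconnects the
remaining players into `V₁, …, V_k`), then the restriction of any PSNE of `G` to `V_p ∪ S`
is a PSNE of the subgame `G'_p` on `V_p ∪ S` in which each node of `S` is made indifferent
(all its incoming weights set to 0 and its threshold set to 0). -/
theorem lig_separator_restriction_psne (V : Type*) [Fintype V] [DecidableEq V]
    (w : V → V → ℝ) (b : V → ℝ) (k : ℕ) (hk : 2 ≤ k)
    (S : Finset V) (Vp : Fin k → Finset V)
    (hS : S.Nonempty) (hVp : ∀ p, (Vp p).Nonempty)
    (hSVp : ∀ p, Disjoint S (Vp p))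
    (hVpq : ∀ p q : Fin k, p ≠ q → Disjoint (Vp p) (Vp q))
    (hcover : S ∪ Finset.univ.biUnion Vp = Finset.univ)
    (hsep : ∀ p q : Fin k, p ≠ q → ∀ u ∈ Vp p, ∀ v ∈ Vp q, w u v = 0)
    (x : V → ℝ) (hx : ∀ v, x v = 1 ∨ x v = -1)
    (hPSNE : ∀ v, x v * ((∑ u ∈ univ.filter (· ≠ v), w u v * x u) - b v) ≥ 0)
    (p : Fin k) :
    ∀ v ∈ Vp p ∪ S,
      x v * ((∑ u ∈ (Vp p ∪ S).filter (· ≠ v),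
          (if v ∈ S then 0 else w u v) * x u)
        - (if v ∈ S then 0 else b v)) ≥ 0 := by
  intro v hv
  by_cases hvS : v ∈ S
  · simp [hvS]
  · simp only [hvS, if_false]
    have hvP : v ∈ Vp p := by
      rcases Finset.mem_union.mp hv with h | h
      · exact h
      · exact absurd h hvS
    have hsum : (∑ u ∈ (Vp p ∪ S).filter (· ≠ v), w u v * x u)
        = ∑ u ∈ univ.filter (· ≠ v), w u v * x u := by
      apply Finset.sum_subset
      · intro u hu
        simp only [Finset.mem_filter] at hu ⊢
        exact ⟨Finset.mem_univ u, hu.2⟩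
      · intro u humem hu
        simp only [Finset.mem_filter, Finset.mem_union, not_and_or, not_not,
          Finset.mem_univ, true_and, not_or] at hu
        rcases hu with ⟨huP, huS⟩ | huv
        · -- u ∉ Vp p, u ∉ S, so u ∈ Vp q for some q ≠ p
          have : u ∈ S ∪ Finset.univ.biUnion Vp := by
            rw [hcover]; exact Finset.mem_univ u
          rcases Finset.mem_union.mp this with h | h
          · exact absurd h huS
          · obtain ⟨q, _, hq⟩ := Finset.mem_biUnion.mp h
            have hqp : q ≠ p := fun h => huP (h ▸ hq)
            rw [hsep q p hqp u hq v hvP, zero_mul]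
        · exact absurd huv (Finset.mem_filter.mp humem).2
    rw [hsum]
    exact hPSNE v
end

section
/- Let G = (V, E) be a hypergraph with a distinguished goal hyperedge e* ∈ E, and construct the hypergraph G' = (e*, E') where E' = {e*} ∪ {(V \ e) ∩ e* : e ∈ E, e ≠ e*}. Then for every nonempty set S ⊆ e*, S is a feasible solution of the unique hyperedge problem on (G, e*) if and only if S is a hitting set of G'. -/
/-- Let `G = (V, E)` be a hypergraph with goal hyperedge `e* ∈ E` and let
`G'` have node set `e*` and hyperedges `{e*} ∪ {(V \ e) ∩ e* : e ∈ E, e ≠ e*}`. A nonempty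
set `S ⊆ e*` is a feasible solution of the unique hyperedge problem on `(G, e*)` iff `S` is
a hitting set of `G'`. -/
theorem unique_hyperedge_iff_hitting_set (V : Type*)
    (E : Set (Set V)) (estar : Set V) (hstar : estar ∈ E)
    (S : Set V) (hS : S.Nonempty) (hSsub : S ⊆ estar) :
    (∀ e ∈ E, S ⊆ e → e = estar)
      ↔
    (∀ f ∈ ({estar} : Set (Set V)) ∪
        {f | ∃ e ∈ E, e ≠ estar ∧ f = eᶜ ∩ estar}, (S ∩ f).Nonempty) := by
  constructor
  · rintro h f (rfl | ⟨e, he, hne, rfl⟩)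
    · obtain ⟨x, hx⟩ := hS
      exact ⟨x, hx, hSsub hx⟩
    · by_contra hemp
      apply hne (h e he ?_)
      intro x hx
      by_contra hxe
      exact hemp ⟨x, hx, hxe, hSsub hx⟩
  · intro h e he hSe
    by_contra hne
    obtain ⟨x, hxS, hxc, _⟩ := h (eᶜ ∩ estar) (Or.inr ⟨e, he, hne, rfl⟩)
    exact hxc (hSe hxS)
end
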